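/- Suppose p(t) ≤ p(1)^{2-t} for every t ∈ ℕ. Then for all n ≥ 1, k ∈ ℝ and every charge sequence ω, the partition function satisfies Z_{n,k}(ω) ≤ p(1) e^{k+ω_n} ∏_{a=1}^{n-1} [1/p(1) + e^{k+ω_a} p(1)]. Consequently f(k) ≤ 𝔼[log(1/p(1) + e^{k+ω_0} p(1))]. -/

import Mathlib

open MeasureTheory Filter Finset

/-- If `p(t) ≤ p(1)^{2-t}` then
`Z_{n,k}(ω) ≤ p(1) e^{k+ω_n} ∏_{a=1}^{n-1} [1/p(1) + e^{k+ω_a} p(1)]`; consequently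
`f(k) ≤ E[log(1/p(1) + e^{k+ω_0} p(1))]`. -/

lemma gaps_exist (n : ℕ) (hn : 1 ≤ n) (B : Finset ℕ) (hB : B ⊆ Finset.Icc 1 n)
    (hnB : n ∈ B) :
    ∃ t : Fin B.card → ℕ, (∀ i, 1 ≤ t i) ∧ (∑ i, t i = n) ∧
      (∀ a : ℕ, a ∈ B ↔ ∃ j : Fin B.card, a = ∑ i ∈ Finset.univ.filter (· ≤ j), t i) := by
  set m := B.card with hm
  have hm0 : 0 < m := Finset.card_pos.2 ⟨n, hnB⟩
  set e := B.orderEmbOfFin hm.symm with he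
  have hemem : ∀ j, e j ∈ B := fun j => Finset.orderEmbOfFin_mem B hm.symm j
  have hele : ∀ j, e j ≤ n := fun j => (Finset.mem_Icc.1 (hB (hemem j))).2
  have hege : ∀ j, 1 ≤ e j := fun j => (Finset.mem_Icc.1 (hB (hemem j))).1
  have hrange : ∀ a, a ∈ B ↔ ∃ j, e j = a := by
    intro a
    rw [← Finset.mem_coe, ← Finset.range_orderEmbOfFin B hm.symm]
    exact Iff.rfl
  -- last element is n
  have hlast : e ⟨m - 1, by omega⟩ = n := by
    obtain ⟨j0, hj0⟩ := (hrange n).1 hnB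
    have : j0 ≤ (⟨m - 1, by omega⟩ : Fin m) := by
      rcases j0 with ⟨v, hv⟩; exact Fin.mk_le_mk.2 (by omega)
    have h1 := (e.le_iff_le).2 this
    rw [hj0] at h1
    exact le_antisymm (hele _) h1
  -- the cumulative function
  set v : ℕ → ℕ := fun i => if h : i - 1 < m then (if i = 0 then 0 else e ⟨i - 1, h⟩) else n with hv
  have hv0 : v 0 = 0 := by simp [hv, hm0]
  have hvsucc : ∀ i (h : i < m), v (i + 1) = e ⟨i, h⟩ := by
    intro i h; simp only [hv, Nat.add_sub_cancel]; rw [dif_pos h, if_neg (by omega)]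
  have hvm : ∀ i, m ≤ i → v i = n := by
    intro i hi
    by_cases h : i - 1 < m
    · have hi' : i = m := by omega
      subst hi'
      simp only [hv]
      rw [dif_pos h, if_neg (by omega)]
      exact hlast
    · simp [hv, h]
  have hmono : Monotone v := by
    apply monotone_nat_of_le_succ
    intro i
    rcases lt_or_ge i m with h | h
    · rw [hvsucc i h]
      rcases Nat.eq_zero_or_pos i with rfl | hi
      · rw [hv0]; omega
      · have h' : i - 1 < m := by omega
        have : v i = e ⟨i - 1, h'⟩ := by
          simp only [hv]; rw [dif_pos h', if_neg (by omega)]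
        rw [this]
        exact (e.le_iff_le).2 (Fin.mk_le_mk.2 (by omega))
    · rw [hvm i h, hvm (i+1) (by omega)]
  have hvlt : ∀ i, i < m → v i < v (i + 1) := by
    intro i h
    rw [hvsucc i h]
    rcases Nat.eq_zero_or_pos i with rfl | hi
    · rw [hv0]; exact lt_of_lt_of_le one_pos (hege _)
    · have h' : i - 1 < m := by omega
      have hvi : v i = e ⟨i - 1, h'⟩ := by
        simp only [hv]; rw [dif_pos h', if_neg (by omega)]
      rw [hvi]
      exact e.strictMono (Fin.mk_lt_mk.2 (by omega))
  refine ⟨fun i => v (i.val + 1) - v i.val, ?_, ?_, ?_⟩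
  · intro i
    have := hvlt i.val i.isLt
    show 1 ≤ v (i.val + 1) - v i.val
    omega
  · rw [Fin.sum_univ_eq_sum_range (fun i => v (i + 1) - v i) m, Finset.sum_range_tsub hmono,
      hv0, hvm m le_rfl]
    omega
  · -- partial sums equal e j
    have hpartial : ∀ j : Fin m,
        ∑ i ∈ Finset.univ.filter (· ≤ j), (v (i.val + 1) - v i.val) = e j := by
      intro j
      have : ∑ i ∈ Finset.univ.filter (· ≤ j), (v (i.val + 1) - v i.val)
          = ∑ i : Fin m, (if i ≤ j then v (i.val + 1) - v i.val else 0) := by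
        rw [Finset.sum_filter]
      rw [this]
      have h2 : ∑ i : Fin m, (if i ≤ j then v (i.val + 1) - v i.val else 0)
          = ∑ i ∈ Finset.range m, (if i ≤ j.val then v (i + 1) - v i else 0) := by
        rw [← Fin.sum_univ_eq_sum_range (fun i => if i ≤ j.val then v (i + 1) - v i else 0) m]
        exact Finset.sum_congr rfl fun i _ => by
          have h : (i ≤ j) ↔ (i.val ≤ j.val) := Iff.rfl
          by_cases hc : i ≤ j
          · rw [if_pos hc, if_pos (h.1 hc)]
          · rw [if_neg hc, if_neg (fun hc2 => hc (h.2 hc2))]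
      rw [h2]
      have h3 : ∑ i ∈ Finset.range m, (if i ≤ j.val then v (i + 1) - v i else 0)
          = ∑ i ∈ Finset.range (j.val + 1), (v (i + 1) - v i) := by
        rw [← Finset.sum_subset (Finset.range_subset_range.2 (by omega : j.val + 1 ≤ m))]
        · exact Finset.sum_congr rfl (fun i hi => by
            rw [if_pos (by have := Finset.mem_range.1 hi; omega)])
        · intro i hi hni
          have h1 := Finset.mem_range.1 hi
          have h2 : ¬ i < j.val + 1 := fun hc => hni (Finset.mem_range.2 hc)
          rw [if_neg (by omega)]
      rw [h3, Finset.sum_range_tsub hmono, hv0, Nat.sub_zero, hvsucc j.val j.isLt, Fin.eta]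
    intro a
    rw [hrange a]
    constructor
    · rintro ⟨j, rfl⟩; exact ⟨j, by simpa using (hpartial j).symm⟩
    · rintro ⟨j, rfl⟩; exact ⟨j, by simpa using (hpartial j).symm⟩

lemma measure_event {S : Type*} [MeasurableSpace S] (P : MeasureTheory.Measure S)
    (X : ℕ → S → ℝ) (hX01 : ∀ a s, X a s = 0 ∨ X a s = 1)
    (p : ℕ → ℝ)
    (hrenew : ∀ (n : ℕ) (t : Fin n → ℕ), (∀ i, 1 ≤ t i) →
      (P {s | ∀ a : ℕ, 1 ≤ a → a ≤ ∑ i, t i →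
          (X a s = 1 ↔ ∃ j : Fin n, a = ∑ i ∈ Finset.univ.filter (· ≤ j), t i)}).toReal
        = ∏ i, p (t i))
    (n : ℕ) (hn : 1 ≤ n) (B : Finset ℕ) (hB : B ⊆ Finset.Icc 1 n) (hnB : n ∈ B) :
    ∃ t : Fin B.card → ℕ, (∀ i, 1 ≤ t i) ∧ (∑ i, t i = n) ∧
      (P {s | ∀ a ∈ Finset.Icc 1 n, X a s = if a ∈ B then 1 else 0}).toReal = ∏ i, p (t i) := by
  obtain ⟨t, ht1, htsum, hmem⟩ := gaps_exist n hn B hB hnB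
  refine ⟨t, ht1, htsum, ?_⟩
  rw [← hrenew B.card t ht1]
  congr 2
  ext s
  simp only [Set.mem_setOf_eq, htsum]
  constructor
  · intro h a h1a han
    have hXa := h a (Finset.mem_Icc.2 ⟨h1a, han⟩)
    rw [← hmem a]
    constructor
    · intro hx1
      by_contra hb
      rw [if_neg hb] at hXa
      rw [hXa] at hx1; norm_num at hx1
    · intro hb; rwa [if_pos hb] at hXa
  · intro h a ha
    obtain ⟨h1a, han⟩ := Finset.mem_Icc.1 ha
    have hiff := (h a h1a han).trans (hmem a).symm
    by_cases hb : a ∈ B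
    · rw [if_pos hb]; exact hiff.2 hb
    · rw [if_neg hb]
      rcases hX01 a s with h0 | h1
      · exact h0
      · exact absurd (hiff.1 h1) hb

lemma prod_zpow_sum {x : ℝ} (hx : x ≠ 0) {ι : Type*} (s : Finset ι) (f : ι → ℤ) :
    ∏ i ∈ s, x ^ f i = x ^ (∑ i ∈ s, f i) := by
  induction s using Finset.cons_induction with
  | empty => simp
  | cons a s ha ih => rw [Finset.prod_cons, Finset.sum_cons, zpow_add₀ hx, ih]

lemma key_bound {S : Type*} [MeasurableSpace S] (P : MeasureTheory.Measure S)
    [MeasureTheory.IsProbabilityMeasure P]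
    (X : ℕ → S → ℝ) (hXmeas : ∀ a, Measurable (X a))
    (hX01 : ∀ a s, X a s = 0 ∨ X a s = 1)
    (p : ℕ → ℝ) (hp : ∀ t, 0 < p t)
    (hpdom : ∀ t : ℕ, 1 ≤ t → p t ≤ p 1 ^ ((2 : ℤ) - (t : ℤ)))
    (hrenew : ∀ (n : ℕ) (t : Fin n → ℕ), (∀ i, 1 ≤ t i) →
      (P {s | ∀ a : ℕ, 1 ≤ a → a ≤ ∑ i, t i →
          (X a s = 1 ↔ ∃ j : Fin n, a = ∑ i ∈ Finset.univ.filter (· ≤ j), t i)}).toReal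
        = ∏ i, p (t i))
    (n : ℕ) (hn : 1 ≤ n) (k : ℝ) (ω : ℕ → ℝ) :
    0 < ∫ s, Real.exp (∑ a ∈ Finset.Icc 1 n, (k + ω a) * X a s) * X n s ∂P ∧
    (∫ s, Real.exp (∑ a ∈ Finset.Icc 1 n, (k + ω a) * X a s) * X n s ∂P) ≤
      p 1 * Real.exp (k + ω n) *
        ∏ a ∈ Finset.Icc 1 (n - 1), (1 / p 1 + Real.exp (k + ω a) * p 1) := by
  have hp1 : (0:ℝ) < p 1 := hp 1
  have hp1ne : p 1 ≠ 0 := hp1.ne'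
  set c : ℕ → ℝ := fun a => Real.exp (k + ω a) with hc
  set E : Finset ℕ → Set S := fun B => {s | ∀ a ∈ Finset.Icc 1 n, X a s = if a ∈ B then 1 else 0}
    with hE
  have hnmem : n ∈ Finset.Icc 1 n := Finset.mem_Icc.2 ⟨hn, le_rfl⟩
  have hsubIcc : Finset.Icc 1 (n-1) ⊆ Finset.Icc 1 n := by
    intro a ha; rcases Finset.mem_Icc.1 ha with ⟨h1, h2⟩; exact Finset.mem_Icc.2 ⟨h1, by omega⟩
  have hnot : ∀ A ∈ (Finset.Icc 1 (n-1)).powerset, n ∉ A := by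
    intro A hA hcontra
    have := Finset.mem_Icc.1 (Finset.mem_powerset.1 hA hcontra)
    omega
  have hsub : ∀ A ∈ (Finset.Icc 1 (n-1)).powerset, insert n A ⊆ Finset.Icc 1 n := by
    intro A hA a ha
    rcases Finset.mem_insert.1 ha with rfl | h
    · exact hnmem
    · exact hsubIcc (Finset.mem_powerset.1 hA h)
  have hEmeas : ∀ B : Finset ℕ, MeasurableSet (E B) := by
    intro B
    have : E B = ⋂ a ∈ (Finset.Icc 1 n : Finset ℕ),
        (X a) ⁻¹' {if a ∈ B then (1:ℝ) else 0} := by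
      ext s; simp [hE, Set.mem_iInter]
    rw [this]
    exact MeasurableSet.biInter (Set.to_countable _)
      (fun a _ => (hXmeas a) (measurableSet_singleton _))
  -- pointwise decomposition
  have hpt : ∀ s, Real.exp (∑ a ∈ Finset.Icc 1 n, (k + ω a) * X a s) * X n s
      = ∑ A ∈ (Finset.Icc 1 (n-1)).powerset,
          (∏ a ∈ insert n A, c a) * Set.indicator (E (insert n A)) 1 s := by
    intro s
    rcases hX01 n s with h0 | h1
    · rw [h0, mul_zero]
      symm
      refine Finset.sum_eq_zero fun A hA => ?_
      rw [Set.indicator_of_notMem, mul_zero]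
      intro hs
      have h1 := hs n hnmem
      rw [if_pos (Finset.mem_insert_self _ _)] at h1
      rw [h0] at h1; norm_num at h1
    · set A0 := (Finset.Icc 1 (n-1)).filter (fun a => X a s = 1) with hA0
      have hA0mem : A0 ∈ (Finset.Icc 1 (n-1)).powerset :=
        Finset.mem_powerset.2 (Finset.filter_subset _ _)
      have hsmem : s ∈ E (insert n A0) := by
        intro a ha
        rcases Finset.mem_Icc.1 ha with ⟨h1a, han⟩
        by_cases hb : a ∈ insert n A0
        · rw [if_pos hb]
          rcases Finset.mem_insert.1 hb with rfl | hb'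
          · exact h1
          · exact (Finset.mem_filter.1 hb').2
        · rw [if_neg hb]
          rcases hX01 a s with h | h
          · exact h
          · exfalso; apply hb
            rcases eq_or_lt_of_le han with rfl | hlt
            · exact Finset.mem_insert_self _ _
            · exact Finset.mem_insert_of_mem
                (Finset.mem_filter.2 ⟨Finset.mem_Icc.2 ⟨h1a, by omega⟩, h⟩)
      rw [Finset.sum_eq_single_of_mem A0 hA0mem]
      · rw [Set.indicator_of_mem hsmem]
        have hsum : ∑ a ∈ Finset.Icc 1 n, (k + ω a) * X a s = ∑ a ∈ insert n A0, (k + ω a) := by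
          have : ∀ a ∈ Finset.Icc 1 n, (k + ω a) * X a s
              = if a ∈ insert n A0 then (k + ω a) else 0 := by
            intro a ha
            have := hsmem a ha
            rw [this]
            by_cases hb : a ∈ insert n A0 <;> simp [hb]
          rw [Finset.sum_congr rfl this, Finset.sum_ite_mem,
            Finset.inter_eq_right.2 (hsub A0 hA0mem)]
        rw [hsum, Real.exp_sum, h1, mul_one, Pi.one_apply, mul_one]
      · intro A hA hne
        rw [Set.indicator_of_notMem, mul_zero]
        intro hs
        apply hne
        ext a
        constructor
        · intro haA
          have haIcc : a ∈ Finset.Icc 1 (n-1) := Finset.mem_powerset.1 hA haA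
          have hXa := hs a (hsubIcc haIcc)
          rw [if_pos (Finset.mem_insert_of_mem haA)] at hXa
          exact Finset.mem_filter.2 ⟨haIcc, hXa⟩
        · intro haA0
          obtain ⟨haIcc, hXa⟩ := Finset.mem_filter.1 haA0
          have h2 := hs a (hsubIcc haIcc)
          by_cases hb : a ∈ insert n A
          · rcases Finset.mem_insert.1 hb with rfl | h
            · exact absurd (Finset.mem_Icc.1 haIcc).2 (by omega)
            · exact h
          · rw [if_neg hb] at h2; rw [h2] at hXa; norm_num at hXa
  -- integral decomposition
  have hZeq : (∫ s, Real.exp (∑ a ∈ Finset.Icc 1 n, (k + ω a) * X a s) * X n s ∂P)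
      = ∑ A ∈ (Finset.Icc 1 (n-1)).powerset,
          (∏ a ∈ insert n A, c a) * (P (E (insert n A))).toReal := by
    rw [MeasureTheory.integral_congr_ae (Filter.Eventually.of_forall hpt)]
    refine (MeasureTheory.integral_finset_sum _ (fun A (hA : A ∈ (Finset.Icc 1 (n-1)).powerset) =>
        ((MeasureTheory.integrable_const (1:ℝ)).indicator (hEmeas (insert n A))).const_mul
          (∏ a ∈ insert n A, c a))).trans ?_
    refine Finset.sum_congr rfl fun A hA => ?_
    rw [MeasureTheory.integral_const_mul]
    congr 1
    rw [show (fun _ : S => (1:ℝ)) = ((1 : S → ℝ)) from rfl,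
      MeasureTheory.integral_indicator_one (hEmeas (insert n A))]
    rfl
  -- values of the measures
  have hval : ∀ A ∈ (Finset.Icc 1 (n-1)).powerset,
      ∃ t : Fin (insert n A).card → ℕ, (∀ i, 1 ≤ t i) ∧ (∑ i, t i = n) ∧
        (P (E (insert n A))).toReal = ∏ i, p (t i) :=
    fun A hA => measure_event P X hX01 p hrenew n hn _ (hsub A hA)
      (Finset.mem_insert_self _ _)
  constructor
  · -- positivity
    rw [hZeq]
    refine Finset.sum_pos' (fun A hA => mul_nonneg (Finset.prod_nonneg fun a _ => (Real.exp_pos _).le)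
      ENNReal.toReal_nonneg) ⟨∅, Finset.empty_mem_powerset _, ?_⟩
    obtain ⟨t, ht1, htsum, heq⟩ := hval ∅ (Finset.empty_mem_powerset _)
    rw [heq]
    exact mul_pos (Finset.prod_pos fun a _ => Real.exp_pos _)
      (Finset.prod_pos fun i _ => hp _)
  · rw [hZeq]
    have hstep : ∀ A ∈ (Finset.Icc 1 (n-1)).powerset,
        (∏ a ∈ insert n A, c a) * (P (E (insert n A))).toReal
        ≤ (∏ a ∈ insert n A, c a) * p 1 ^ ((2 * ((A.card : ℤ) + 1)) - n) := by
      intro A hA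
      obtain ⟨t, ht1, htsum, heq⟩ := hval A hA
      rw [heq]
      refine mul_le_mul_of_nonneg_left ?_ (Finset.prod_nonneg fun a _ => (Real.exp_pos _).le)
      have hcard : (insert n A).card = A.card + 1 := Finset.card_insert_of_notMem (hnot A hA)
      calc ∏ i, p (t i) ≤ ∏ i, p 1 ^ ((2:ℤ) - (t i : ℤ)) :=
            Finset.prod_le_prod (fun i _ => (hp _).le) (fun i _ => hpdom (t i) (ht1 i))
        _ = p 1 ^ (∑ i, ((2:ℤ) - (t i : ℤ))) := prod_zpow_sum hp1ne _ _
        _ = p 1 ^ ((2 * ((A.card : ℤ) + 1)) - n) := by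
            have h2 : ∑ i, (t i : ℤ) = (n : ℤ) := by
              exact_mod_cast congrArg (Nat.cast (R := ℤ)) htsum
            have hs : ∑ i, ((2:ℤ) - (t i : ℤ))
                = 2 * (((insert n A).card : ℤ)) - (n : ℤ) := by
              rw [Finset.sum_sub_distrib, Finset.sum_const, Finset.card_univ, Fintype.card_fin,
                h2, nsmul_eq_mul]
              ring
            have hc2 : ((A.card + 1 : ℕ) : ℤ) = (A.card : ℤ) + 1 := by push_cast; ring
            rw [hs, hcard, hc2]
    refine le_trans (Finset.sum_le_sum hstep) (le_of_eq ?_)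
    -- exact algebra
    have hflip : ∏ a ∈ Finset.Icc 1 (n-1), (1 / p 1 + c a * p 1)
        = ∏ a ∈ Finset.Icc 1 (n-1), (c a * p 1 + 1 / p 1) :=
      Finset.prod_congr rfl fun a _ => add_comm _ _
    rw [hflip, Finset.prod_add, Finset.mul_sum]
    refine Finset.sum_congr rfl fun A hA => ?_
    have hnA := hnot A hA
    have hcardle : A.card ≤ n - 1 := by
      have := Finset.card_le_card (Finset.mem_powerset.1 hA)
      rwa [Nat.card_Icc, Nat.add_sub_cancel] at this
    rw [Finset.prod_insert hnA, Finset.prod_const,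
      Finset.card_sdiff_of_subset (Finset.mem_powerset.1 hA), Nat.card_Icc, Nat.add_sub_cancel,
      Finset.prod_mul_distrib, Finset.prod_const]
    have hzp : p 1 ^ ((2 * ((A.card : ℤ) + 1)) - n)
        = p 1 * (p 1 ^ A.card * (1 / p 1) ^ (n - 1 - A.card)) := by
      rw [one_div, inv_pow, ← zpow_natCast (p 1) A.card,
        ← zpow_natCast (p 1) (n - 1 - A.card), ← zpow_neg, ← zpow_add₀ hp1ne,
        ← zpow_one_add₀ hp1ne]
      congr 1
      omega
    rw [hzp]
    ring

theorem stmt_2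
    {S : Type*} [MeasurableSpace S] (P : Measure S) [IsProbabilityMeasure P]
    (X : ℕ → S → ℝ) (hXmeas : ∀ a, Measurable (X a))
    (hX01 : ∀ a s, X a s = 0 ∨ X a s = 1) (hX0 : ∀ s, X 0 s = 1)
    -- the inter-arrival law and its exponential domination
    (p : ℕ → ℝ) (hp : ∀ t, 0 < p t)
    (hpdom : ∀ t : ℕ, 1 ≤ t → p t ≤ p 1 ^ ((2 : ℤ) - (t : ℤ)))
    (hgap : ∀ n : ℕ, 1 ≤ n →
      (P {s | (∀ a ∈ Finset.Icc 1 (n - 1), X a s = 0) ∧ X n s = 1}).toReal = p n)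
    (hrenew : ∀ (n : ℕ) (t : Fin n → ℕ), (∀ i, 1 ≤ t i) →
      (P {s | ∀ a : ℕ, 1 ≤ a → a ≤ ∑ i, t i →
          (X a s = 1 ↔ ∃ j : Fin n, a = ∑ i ∈ Finset.univ.filter (· ≤ j), t i)}).toReal
        = ∏ i, p (t i))
    (Z : ℕ → ℝ → (ℕ → ℝ) → ℝ)
    (hZ : ∀ n k ω, Z n k ω =
      ∫ s, Real.exp (∑ a ∈ Finset.Icc 1 n, (k + ω a) * X a s) * X n s ∂P)
    -- the disorder: i.i.d. charges with mean zero
    (μc : Measure (ℕ → ℝ)) [IsProbabilityMeasure μc]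
    (hident : ∀ a : ℕ, Measure.map (fun ω : ℕ → ℝ => ω a) μc =
      Measure.map (fun ω : ℕ → ℝ => ω 0) μc)
    (hωint : ∀ a : ℕ, Integrable (fun ω : ℕ → ℝ => ω a) μc)
    (hmean : ∀ a : ℕ, ∫ ω : ℕ → ℝ, ω a ∂μc = 0)
    (hlogint : ∀ k : ℝ,
      Integrable (fun ω : ℕ → ℝ => Real.log (1 / p 1 + Real.exp (k + ω 0) * p 1)) μc)
    (hZint : ∀ n k, Integrable (fun ω : ℕ → ℝ => Real.log (Z n k ω)) μc)
    -- the free energy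
    (f : ℝ → ℝ)
    (hf : ∀ k, Tendsto (fun n : ℕ => (∫ ω, Real.log (Z n k ω) ∂μc) / n)
      atTop (nhds (f k))) :
    (∀ (n : ℕ), 1 ≤ n → ∀ (k : ℝ) (ω : ℕ → ℝ),
      Z n k ω ≤ p 1 * Real.exp (k + ω n) *
        ∏ a ∈ Finset.Icc 1 (n - 1), (1 / p 1 + Real.exp (k + ω a) * p 1)) ∧
    (∀ k : ℝ, f k ≤ ∫ ω : ℕ → ℝ, Real.log (1 / p 1 + Real.exp (k + ω 0) * p 1) ∂μc) := by
  have key : ∀ (n : ℕ), 1 ≤ n → ∀ (k : ℝ) (ω : ℕ → ℝ),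
      0 < Z n k ω ∧ Z n k ω ≤ p 1 * Real.exp (k + ω n) *
        ∏ a ∈ Finset.Icc 1 (n - 1), (1 / p 1 + Real.exp (k + ω a) * p 1) := by
    intro n hn k ω
    rw [hZ]
    exact key_bound P X hXmeas hX01 p hp hpdom hrenew n hn k ω
  refine ⟨fun n hn k ω => (key n hn k ω).2, ?_⟩
  intro k
  set I := ∫ ω : ℕ → ℝ, Real.log (1 / p 1 + Real.exp (k + ω 0) * p 1) ∂μc with hI
  have hp1 : (0:ℝ) < p 1 := hp 1
  set g : ℝ → ℝ := fun x => Real.log (1 / p 1 + Real.exp (k + x) * p 1) with hg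
  have hgmeas : Measurable g :=
    Real.measurable_log.comp (measurable_const.add
      ((Real.measurable_exp.comp (measurable_const.add measurable_id)).mul_const _))
  have heval : ∀ a : ℕ, Measurable (fun ω : ℕ → ℝ => ω a) := fun a => measurable_pi_apply a
  have hInt : ∀ a : ℕ, Integrable (fun ω : ℕ → ℝ => g (ω a)) μc := by
    intro a
    have h0 : Integrable (g ∘ (fun ω : ℕ → ℝ => ω 0)) μc := hlogint k
    have h1 : Integrable g (Measure.map (fun ω : ℕ → ℝ => ω 0) μc) :=
      (integrable_map_measure hgmeas.aestronglyMeasurable (heval 0).aemeasurable).2 h0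
    have h2 : Integrable g (Measure.map (fun ω : ℕ → ℝ => ω a) μc) := by
      rw [hident a]; exact h1
    exact (integrable_map_measure hgmeas.aestronglyMeasurable (heval a).aemeasurable).1 h2
  have hIeq : ∀ a : ℕ, ∫ ω : ℕ → ℝ, g (ω a) ∂μc = I := by
    intro a
    calc ∫ ω : ℕ → ℝ, g (ω a) ∂μc
        = ∫ x, g x ∂(Measure.map (fun ω : ℕ → ℝ => ω a) μc) :=
          (integral_map (heval a).aemeasurable hgmeas.aestronglyMeasurable).symm
      _ = ∫ x, g x ∂(Measure.map (fun ω : ℕ → ℝ => ω 0) μc) := by rw [hident a]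
      _ = ∫ ω : ℕ → ℝ, g (ω 0) ∂μc :=
          integral_map (heval 0).aemeasurable hgmeas.aestronglyMeasurable
      _ = I := rfl
  have hub : ∀ n : ℕ, 1 ≤ n →
      (∫ ω, Real.log (Z n k ω) ∂μc) ≤ Real.log (p 1) + k + ((n - 1 : ℕ) : ℝ) * I := by
    intro n hn
    have hptω : ∀ ω : ℕ → ℝ, Real.log (Z n k ω)
        ≤ (Real.log (p 1) + k) + ω n + ∑ a ∈ Finset.Icc 1 (n-1), g (ω a) := by
      intro ω
      obtain ⟨hpos, hle⟩ := key n hn k ω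
      have hfac : ∀ a ∈ Finset.Icc 1 (n-1), (1 / p 1 + Real.exp (k + ω a) * p 1) ≠ 0 :=
        fun a _ => by positivity
      calc Real.log (Z n k ω)
          ≤ Real.log (p 1 * Real.exp (k + ω n) *
              ∏ a ∈ Finset.Icc 1 (n-1), (1 / p 1 + Real.exp (k + ω a) * p 1)) :=
            Real.log_le_log hpos hle
        _ = (Real.log (p 1) + k) + ω n + ∑ a ∈ Finset.Icc 1 (n-1), g (ω a) := by
            rw [Real.log_mul (by positivity) (by positivity),
              Real.log_mul hp1.ne' (Real.exp_pos _).ne', Real.log_exp, Real.log_prod hfac]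
            simp only [hg]
            ring
    have hbint : Integrable (fun ω : ℕ → ℝ =>
        (Real.log (p 1) + k) + ω n + ∑ a ∈ Finset.Icc 1 (n-1), g (ω a)) μc :=
      ((integrable_const _).add (hωint n)).add (integrable_finset_sum _ (fun a _ => hInt a))
    have h2 : (∫ ω, Real.log (Z n k ω) ∂μc)
        ≤ ∫ ω, ((Real.log (p 1) + k) + ω n + ∑ a ∈ Finset.Icc 1 (n-1), g (ω a)) ∂μc :=
      integral_mono (hZint n k) hbint hptω
    have hi1 : Integrable (fun ω : ℕ → ℝ => (Real.log (p 1) + k) + ω n) μc :=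
      (integrable_const _).add (hωint n)
    have hi2 : Integrable (fun ω : ℕ → ℝ => ∑ a ∈ Finset.Icc 1 (n-1), g (ω a)) μc :=
      integrable_finset_sum _ (fun a _ => hInt a)
    have e1 : ∫ ω, ((Real.log (p 1) + k) + ω n + ∑ a ∈ Finset.Icc 1 (n-1), g (ω a)) ∂μc
        = (∫ ω, ((Real.log (p 1) + k) + ω n) ∂μc)
          + ∫ ω, ∑ a ∈ Finset.Icc 1 (n-1), g (ω a) ∂μc := integral_add hi1 hi2
    have e2 : ∫ ω : ℕ → ℝ, ((Real.log (p 1) + k) + ω n) ∂μc = (Real.log (p 1) + k) := by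
      have h := integral_add (μ := μc) (integrable_const (Real.log (p 1) + k)) (hωint n)
      rw [integral_const, hmean n] at h
      simpa using h
    have e3 : ∫ ω : ℕ → ℝ, ∑ a ∈ Finset.Icc 1 (n-1), g (ω a) ∂μc = ((n - 1 : ℕ) : ℝ) * I := by
      rw [integral_finset_sum _ (fun a _ => hInt a),
        Finset.sum_congr rfl (fun a _ => hIeq a), Finset.sum_const, Nat.card_Icc,
        Nat.add_sub_cancel, nsmul_eq_mul]
    rw [e1, e2, e3] at h2
    linarith
  have hC : Tendsto (fun n : ℕ => (Real.log (p 1) + k) * (1/(n:ℝ)) + (1 - 1/(n:ℝ)) * I)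
      atTop (nhds ((Real.log (p 1) + k) * 0 + (1 - 0) * I)) :=
    (tendsto_one_div_atTop_nhds_zero_nat.const_mul _).add
      ((tendsto_const_nhds.sub tendsto_one_div_atTop_nhds_zero_nat).mul_const _)
  have hval : (Real.log (p 1) + k) * 0 + (1 - 0) * I = I := by ring
  rw [hval] at hC
  have hT : Tendsto (fun n : ℕ => (Real.log (p 1) + k + ((n - 1 : ℕ) : ℝ) * I) / n)
      atTop (nhds I) := by
    refine hC.congr' ?_
    filter_upwards [eventually_ge_atTop 1] with n hn
    have hn0 : (n:ℝ) ≠ 0 := by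
      have : (1:ℝ) ≤ n := by exact_mod_cast hn
      linarith
    have hcast : ((n - 1 : ℕ) : ℝ) = (n:ℝ) - 1 := by
      rw [Nat.cast_sub hn]; norm_num
    rw [hcast]
    field_simp
    try ring
  refine le_of_tendsto_of_tendsto (hf k) hT ?_
  filter_upwards [eventually_ge_atTop 1] with n hn
  have hn0 : (0:ℝ) < n := by exact_mod_cast Nat.lt_of_lt_of_le Nat.zero_lt_one hn
  exact div_le_div_of_nonneg_right (hub n hn) hn0.le
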